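/- Every D-semianalytic subset of a reduced affinoid variety X is subanalytic in X. -/

import Mathlib

/-!  Prelude: rigid-analytic basics over a complete non-archimedean
algebraically closed field `K`. -/

open scoped BoundedContinuousFunction

noncomputable section

namespace RigidQE

variable (K : Type) [NormedField K] [CompleteSpace K] [IsAlgClosed K] [IsUltrametricDist K]

/-- The valuation ring `R = {x : K | ‖x‖ ≤ 1}` of `K`. -/
def Ro : Subring K where
  carrier := {x | ‖x‖ ≤ 1}
  zero_mem' := by simp
  one_mem' := by simp
  add_mem' := fun {a b} ha hb => le_trans (IsUltrametricDist.norm_add_le_max a b) (max_le ha hb)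
  neg_mem' := fun {a} ha => by simpa using ha
  mul_mem' := fun {a b} ha hb => le_trans (norm_mul_le a b)
    (by simpa using mul_le_one₀ ha (norm_nonneg b) hb)

/-- The maximal ideal `℘ = {x : K | ‖x‖ < 1}` of the valuation ring. -/
def RoMax : Ideal (Ro K) where
  carrier := {x | ‖(x : K)‖ < 1}
  zero_mem' := by simp
  add_mem' := fun {a b} ha hb =>
    lt_of_le_of_lt (IsUltrametricDist.norm_add_le_max (a : K) (b : K)) (max_lt ha hb)
  smul_mem' := fun c x hx => by
    have h1 : ‖(c : K)‖ ≤ 1 := c.2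
    have : ‖(c : K) * (x : K)‖ ≤ 1 * ‖(x : K)‖ := le_trans (norm_mul_le _ _) (by gcongr)
    simpa using lt_of_le_of_lt (by simpa using this) hx

/-- The closed unit polydisc `R^m ⊆ K^m`. -/
def UnitBall (m : ℕ) : Set (Fin m → K) := {x | ∀ i, ‖x i‖ ≤ 1}

/-- The `i`-th coordinate function on the unit polydisc, as a bounded continuous function. -/
def coordFn (m : ℕ) (i : Fin m) : (UnitBall K m) →ᵇ K :=
  BoundedContinuousFunction.ofNormedAddCommGroup (fun x => x.1 i)
    ((continuous_apply i).comp continuous_subtype_val) 1 (fun x => x.2 i)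

/-- The Tate algebra `K⟨S₁,…,Sₘ⟩` of strictly convergent power series, realised concretely
as the closure, with respect to the supremum norm, of the algebra of polynomial functions
on the unit polydisc. -/
def TateAlg (m : ℕ) : Subalgebra K ((UnitBall K m) →ᵇ K) :=
  (Algebra.adjoin K (Set.range (coordFn K m))).topologicalClosure

end RigidQE

end

noncomputable section
namespace RigidQE

variable (K : Type) [NormedField K] [CompleteSpace K] [IsAlgClosed K] [IsUltrametricDist K]

/-- The projection `R^{m+N} → R^m` on the first `m` coordinates. -/
def ballProj (m N : ℕ) (z : UnitBall K (m + N)) : UnitBall K m :=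
  ⟨fun i => z.1 (Fin.castAdd N i), fun i => z.2 _⟩

lemma ballProj_continuous (m N : ℕ) : Continuous (ballProj K m N) := by
  apply Continuous.subtype_mk
  exact continuous_pi fun i => (continuous_apply _).comp continuous_subtype_val

/-- Pullback of bounded functions along the projection of polydiscs. -/
def ballPull (m N : ℕ) : ((UnitBall K m) →ᵇ K) →ₐ[K] ((UnitBall K (m + N)) →ᵇ K) where
  toFun f := f.compContinuous ⟨ballProj K m N, ballProj_continuous K m N⟩
  map_one' := by ext z; simp
  map_mul' f g := by ext z; simp
  map_zero' := by ext z; simp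
  map_add' f g := by ext z; simp
  commutes' c := by ext z; simp

lemma ballPull_lipschitz (m N : ℕ) : LipschitzWith 1 (ballPull K m N) := by
  apply LipschitzWith.of_dist_le_mul
  intro f g
  simp only [NNReal.coe_one, one_mul]
  refine (BoundedContinuousFunction.dist_le (dist_nonneg (x := f) (y := g))).2 ?_
  intro z
  exact BoundedContinuousFunction.dist_coe_le_dist (f := f) (g := g) (ballProj K m N z)

lemma ballPull_mem_TateAlg (m N : ℕ) {f : (UnitBall K m) →ᵇ K} (hf : f ∈ TateAlg K m) :
    ballPull K m N f ∈ TateAlg K (m + N) := by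
  have hsub : (ballPull K m N) '' (Algebra.adjoin K (Set.range (coordFn K m)) : Set _)
      ⊆ (Algebra.adjoin K (Set.range (coordFn K (m + N))) : Set _) := by
    rintro g ⟨g', hg', rfl⟩
    have : ballPull K m N g' ∈ (Algebra.adjoin K (Set.range (coordFn K m))).map
        (ballPull K m N) := Subalgebra.mem_map.2 ⟨g', hg', rfl⟩
    rw [AlgHom.map_adjoin] at this
    refine Algebra.adjoin_mono ?_ this
    rintro h ⟨h', ⟨i, rfl⟩, rfl⟩
    exact ⟨Fin.castAdd N i, by ext z; rfl⟩
  have := (image_closure_subset_closure_image (s := (Algebra.adjoin K (Set.range (coordFn K m)) :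
      Set _)) (ballPull_lipschitz K m N).continuous) (Set.mem_image_of_mem _ hf)
  exact closure_mono hsub this

/-- An affinoid variety, realised concretely as the zero locus, inside a closed unit
polydisc, of a set of strictly convergent power series. -/
structure Affinoid where
  m : ℕ
  carrier : Set (UnitBall K m)
  isZeroLocus : ∃ S : Set ((UnitBall K m) →ᵇ K),
    (∀ f ∈ S, f ∈ TateAlg K m) ∧ carrier = {x | ∀ f ∈ S, f x = 0}

variable {K}

/-- Restriction of (bounded continuous) functions on the polydisc to a subset, as plain
functions. -/
def resHom {m : ℕ} (Z : Set (UnitBall K m)) : ((UnitBall K m) →ᵇ K) →ₐ[K] (Z → K) where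
  toFun f := fun z => f z.1
  map_one' := rfl
  map_mul' f g := rfl
  map_zero' := rfl
  map_add' f g := rfl
  commutes' c := rfl

/-- The affinoid algebra of `X`, realised concretely as the algebra of functions on `X`
which are restrictions of strictly convergent power series.  (Since `K` is algebraically
closed, this faithfully represents the reduced affinoid algebra.) -/
def Affinoid.O (X : Affinoid K) : Subalgebra K (X.carrier → K) :=
  (TateAlg K X.m).map (resHom X.carrier)

/-- A basic semianalytic subset of an affinoid variety. -/
def IsBasicSemianalytic (X : Affinoid K) (S : Set X.carrier) : Prop :=
  ∃ (mm n : ℕ) (p q : Fin mm → X.O), n ≤ mm ∧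
    S = {x | (∀ i : Fin mm, (i : ℕ) < n → ‖(p i : X.carrier → K) x‖ ≤ ‖(q i : X.carrier → K) x‖)
      ∧ (∀ i : Fin mm, n ≤ (i : ℕ) → ‖(p i : X.carrier → K) x‖ < ‖(q i : X.carrier → K) x‖)}

/-- A semianalytic subset of an affinoid variety: a finite union of basic sets. -/
def IsSemianalytic (X : Affinoid K) (S : Set X.carrier) : Prop :=
  ∃ (k : ℕ) (B : Fin k → Set X.carrier),
    (∀ j, IsBasicSemianalytic X (B j)) ∧ S = ⋃ j, B j

variable (K)

/-- The product `X × R^N` of an affinoid variety with a closed unit polydisc. -/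
def Affinoid.prod (X : Affinoid K) (N : ℕ) : Affinoid K where
  m := X.m + N
  carrier := {z | ballProj K X.m N z ∈ X.carrier}
  isZeroLocus := by
    obtain ⟨S, hS, hXS⟩ := X.isZeroLocus
    refine ⟨(ballPull K X.m N) '' S, ?_, ?_⟩
    · rintro f ⟨f', hf', rfl⟩
      exact ballPull_mem_TateAlg K X.m N (hS f' hf')
    · ext z
      simp only [Set.mem_setOf_eq, hXS, Set.forall_mem_image]
      rfl

variable {K}

/-- The projection map `X × R^N → X` on points. -/
def Affinoid.projFun (X : Affinoid K) (N : ℕ) (z : (X.prod K N).carrier) : X.carrier :=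
  ⟨ballProj K X.m N z.1, z.2⟩

/-- A subanalytic subset of an affinoid variety: the image of a semianalytic subset of
`X × R^N` under the projection `X × R^N → X`. -/
def IsSubanalytic (X : Affinoid K) (S : Set X.carrier) : Prop :=
  ∃ (N : ℕ) (T : Set (X.prod K N).carrier),
    IsSemianalytic (X.prod K N) T ∧ S = (X.projFun N) '' T

end RigidQE
end

noncomputable section
namespace RigidQE

variable {K : Type} [NormedField K] [CompleteSpace K] [IsAlgClosed K] [IsUltrametricDist K]

/-- A map of affinoid varieties: a map on points which pulls analytic functions back to
analytic functions (equivalently, a map induced by a `K`-algebra morphism of the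
corresponding affinoid algebras). -/
structure AffinoidMap (Y X : Affinoid K) where
  toFun : Y.carrier → X.carrier
  pullback : ∀ p : X.O, (fun y => (p : X.carrier → K) (toFun y)) ∈ Y.O

/-- The `K`-algebra morphism of affinoid algebras corresponding to a map of affinoid
varieties. -/
def AffinoidMap.algHom {Y X : Affinoid K} (f : AffinoidMap Y X) : X.O →ₐ[K] Y.O where
  toFun p := ⟨fun y => (p : X.carrier → K) (f.toFun y), f.pullback p⟩
  map_one' := by ext y; simp
  map_mul' p q := by ext y; simp
  map_zero' := by ext y; simp
  map_add' p q := by ext y; simp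
  commutes' c := by ext y; simp

/-- A map of affinoid varieties is flat if the corresponding morphism of affinoid algebras
is flat. -/
def AffinoidMap.Flat {Y X : Affinoid K} (f : AffinoidMap Y X) : Prop :=
  RingHom.Flat f.algHom.toRingHom

open Classical in
/-- The truncated division function `D` of Denef–van den Dries:
`D (a, b) = a / b` if `‖a‖ ≤ ‖b‖ ≠ 0`, and `D (a, b) = 0` otherwise. -/
def Ddiv (a b : K) : K := if ‖a‖ ≤ ‖b‖ ∧ b ≠ 0 then a / b else 0

/-- The point `(x, t) ∈ X × R^N` determined by `x ∈ X` and `t ∈ R^N`. -/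
def extendPt (X : Affinoid K) (N : ℕ) (x : X.carrier) (t : Fin N → K)
    (ht : ∀ i, ‖t i‖ ≤ 1) : (X.prod K N).carrier := by
  have hmem : Fin.append (fun i => x.1.1 i) t ∈ UnitBall K (X.m + N) := by
    intro j
    refine Fin.addCases (motive := fun j => ‖Fin.append (fun i => x.1.1 i) t j‖ ≤ 1)
      (fun i => ?_) (fun i => ?_) j
    · simp only [Fin.append_left]; exact x.1.2 i
    · simp only [Fin.append_right]; exact ht i
  refine ⟨⟨Fin.append (fun i => x.1.1 i) t, hmem⟩, ?_⟩
  show ballProj K X.m N ⟨Fin.append (fun i => x.1.1 i) t, hmem⟩ ∈ X.carrier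
  have h : ballProj K X.m N ⟨Fin.append (fun i => x.1.1 i) t, hmem⟩ = x.1 := by
    apply Subtype.ext; funext i
    show Fin.append (fun i => x.1.1 i) t (Fin.castAdd N i) = x.1.1 i
    rw [Fin.append_left]
  rw [h]; exact x.2

/-- The algebra `A^D` of `D`-functions on an affinoid variety `X = Sp A`: the smallest
`K`-algebra of `K`-valued functions on `X` containing `A` and closed under truncated
division `D` and under composition with strictly convergent power series over `A`
(the latter being realised as analytic functions on `X × R^N`). -/
inductive IsDFun (X : Affinoid K) : (X.carrier → K) → Prop
  | base (p : X.O) : IsDFun X (p : X.carrier → K)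
  | smul (c : K) {p : X.carrier → K} : IsDFun X p → IsDFun X (c • p)
  | add {p q : X.carrier → K} : IsDFun X p → IsDFun X q → IsDFun X (p + q)
  | mul {p q : X.carrier → K} : IsDFun X p → IsDFun X q → IsDFun X (p * q)
  | div {p q : X.carrier → K} : IsDFun X p → IsDFun X q →
      IsDFun X (fun x => Ddiv (p x) (q x))
  | comp (N : ℕ) (p : (X.prod K N).O) (q : Fin N → (X.carrier → K))
      (hq : ∀ i, IsDFun X (q i)) (hq1 : ∀ i x, ‖q i x‖ ≤ 1) :
      IsDFun X (fun x =>
        (p : (X.prod K N).carrier → K) (extendPt X N x (fun i => q i x) (fun i => hq1 i x)))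

/-- A basic `D`-semianalytic subset of an affinoid variety. -/
def IsBasicDSemianalytic (X : Affinoid K) (S : Set X.carrier) : Prop :=
  ∃ (mm n : ℕ) (p q : Fin mm → (X.carrier → K)), n ≤ mm ∧
    (∀ i, IsDFun X (p i) ∧ IsDFun X (q i)) ∧
    S = {x | (∀ i : Fin mm, (i : ℕ) < n → ‖p i x‖ ≤ ‖q i x‖)
      ∧ (∀ i : Fin mm, n ≤ (i : ℕ) → ‖p i x‖ < ‖q i x‖)}

/-- A `D`-semianalytic subset of an affinoid variety: a finite union of basic
`D`-semianalytic sets. -/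
def IsDSemianalytic (X : Affinoid K) (S : Set X.carrier) : Prop :=
  ∃ (k : ℕ) (B : Fin k → Set X.carrier),
    (∀ j, IsBasicDSemianalytic X (B j)) ∧ S = ⋃ j, B j

end RigidQE
end

noncomputable section
namespace RigidQE
set_option linter.unusedSectionVars false

section Machinery

variable {K : Type} [NormedField K] [CompleteSpace K] [IsAlgClosed K] [IsUltrametricDist K]

/-! ### General coordinate-reindexing pullbacks -/

/-- Reindexing map on unit polydiscs. -/
def ballMap {M M' : ℕ} (ρ : Fin M' → Fin M) (z : UnitBall K M) : UnitBall K M' :=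
  ⟨fun i => z.1 (ρ i), fun i => z.2 (ρ i)⟩

lemma ballMap_continuous {M M' : ℕ} (ρ : Fin M' → Fin M) :
    Continuous (ballMap (K := K) ρ) := by
  apply Continuous.subtype_mk
  exact continuous_pi fun i => (continuous_apply (ρ i)).comp continuous_subtype_val

/-- Pullback of bounded functions along a reindexing map. -/
def pullBCF {M M' : ℕ} (ρ : Fin M' → Fin M) :
    ((UnitBall K M') →ᵇ K) →ₐ[K] ((UnitBall K M) →ᵇ K) where
  toFun f := f.compContinuous ⟨ballMap ρ, ballMap_continuous ρ⟩
  map_one' := by ext z; simp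
  map_mul' f g := by ext z; simp
  map_zero' := by ext z; simp
  map_add' f g := by ext z; simp
  commutes' c := by ext z; simp

lemma pullBCF_lipschitz {M M' : ℕ} (ρ : Fin M' → Fin M) :
    LipschitzWith 1 (pullBCF (K := K) ρ) := by
  apply LipschitzWith.of_dist_le_mul
  intro f g
  simp only [NNReal.coe_one, one_mul]
  refine (BoundedContinuousFunction.dist_le (dist_nonneg (x := f) (y := g))).2 ?_
  intro z
  exact BoundedContinuousFunction.dist_coe_le_dist (f := f) (g := g) (ballMap ρ z)

lemma pullBCF_mem_TateAlg {M M' : ℕ} (ρ : Fin M' → Fin M)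
    {f : (UnitBall K M') →ᵇ K} (hf : f ∈ TateAlg K M') :
    pullBCF ρ f ∈ TateAlg K M := by
  have hsub : (pullBCF (K := K) ρ) '' (Algebra.adjoin K (Set.range (coordFn K M')) : Set _)
      ⊆ (Algebra.adjoin K (Set.range (coordFn K M)) : Set _) := by
    rintro g ⟨g', hg', rfl⟩
    have : pullBCF ρ g' ∈ (Algebra.adjoin K (Set.range (coordFn K M'))).map
        (pullBCF (K := K) ρ) := Subalgebra.mem_map.2 ⟨g', hg', rfl⟩
    rw [AlgHom.map_adjoin] at this
    refine Algebra.adjoin_mono ?_ this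
    rintro h ⟨h', ⟨i, rfl⟩, rfl⟩
    exact ⟨ρ i, by ext z; rfl⟩
  have := (image_closure_subset_closure_image (s := (Algebra.adjoin K (Set.range (coordFn K M')) :
      Set _)) (pullBCF_lipschitz (K := K) ρ).continuous) (Set.mem_image_of_mem _ hf)
  exact closure_mono hsub this

/-! ### Reindexing maps between products `X × R^N` -/

variable {X : Affinoid K}

/-- The reindexing map `X × R^N → X × R^{N'}` induced by a map of indices fixing the
`X`-coordinates. -/
def prodMap (X : Affinoid K) {N N' : ℕ} (ρ : Fin (X.m + N') → Fin (X.m + N))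
    (hρ : ∀ i : Fin X.m, ρ (Fin.castAdd N' i) = Fin.castAdd N i)
    (z : (X.prod K N).carrier) : (X.prod K N').carrier := by
  refine ⟨ballMap ρ z.1, ?_⟩
  have h : ballProj K X.m N' (ballMap ρ z.1) = ballProj K X.m N z.1 := by
    apply Subtype.ext; funext i
    show z.1.1 (ρ (Fin.castAdd N' i)) = z.1.1 (Fin.castAdd N i)
    rw [hρ]
  show ballProj K X.m N' (ballMap ρ z.1) ∈ X.carrier
  rw [h]; exact z.2

lemma prodMap_proj {N N' : ℕ} (ρ : Fin (X.m + N') → Fin (X.m + N))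
    (hρ : ∀ i : Fin X.m, ρ (Fin.castAdd N' i) = Fin.castAdd N i)
    (z : (X.prod K N).carrier) :
    X.projFun N' (prodMap X ρ hρ z) = X.projFun N z := by
  apply Subtype.ext; apply Subtype.ext; funext i
  show z.1.1 (ρ (Fin.castAdd N' i)) = z.1.1 (Fin.castAdd N i)
  rw [hρ]

lemma prodMap_coord {N N' : ℕ} (ρ : Fin (X.m + N') → Fin (X.m + N))
    (hρ : ∀ i : Fin X.m, ρ (Fin.castAdd N' i) = Fin.castAdd N i)
    (z : (X.prod K N).carrier) (k : Fin (X.m + N')) :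
    (prodMap X ρ hρ z).1.1 k = z.1.1 (ρ k) := rfl

lemma comp_prodMap_mem_O {N N' : ℕ} (ρ : Fin (X.m + N') → Fin (X.m + N))
    (hρ : ∀ i : Fin X.m, ρ (Fin.castAdd N' i) = Fin.castAdd N i)
    (p : (X.prod K N').O) :
    (fun z => (p : (X.prod K N').carrier → K) (prodMap X ρ hρ z)) ∈ (X.prod K N).O := by
  obtain ⟨f, hf, hfp⟩ := Subalgebra.mem_map.1 p.2
  refine Subalgebra.mem_map.2 ⟨pullBCF ρ f, pullBCF_mem_TateAlg ρ hf, ?_⟩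
  funext z
  show f (ballMap ρ z.1) = (p : (X.prod K N').carrier → K) (prodMap X ρ hρ z)
  rw [← hfp]
  rfl

/-- Pullback of an analytic function on `X` to `X × R^N`. -/
lemma comp_proj_mem_O {N : ℕ} (p : X.O) :
    (fun z => (p : X.carrier → K) (X.projFun N z)) ∈ (X.prod K N).O := by
  obtain ⟨f, hf, hfp⟩ := Subalgebra.mem_map.1 p.2
  refine Subalgebra.mem_map.2 ⟨pullBCF (Fin.castAdd N) f,
    pullBCF_mem_TateAlg _ hf, ?_⟩
  funext z
  show f (ballMap (Fin.castAdd N) z.1) = (p : X.carrier → K) (X.projFun N z)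
  rw [← hfp]
  rfl

lemma coord_mem_O (X' : Affinoid K) (k : Fin X'.m) :
    (fun z : X'.carrier => z.1.1 k) ∈ X'.O := by
  refine Subalgebra.mem_map.2 ⟨coordFn K X'.m k, ?_, rfl⟩
  exact (Subalgebra.le_topologicalClosure _) (Algebra.subset_adjoin ⟨k, rfl⟩)

lemma const_mul_mem_O {X' : Affinoid K} (a : K) {f : X'.carrier → K} (hf : f ∈ X'.O) :
    (fun z => a * f z) ∈ X'.O := by
  have := X'.O.smul_mem hf a
  have he : (a • f) = (fun z => a * f z) := by funext z; simp [Pi.smul_apply, smul_eq_mul]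
  rwa [he] at this

/-! ### Points of `X × R^N` -/

lemma extendPt_coord_cast {N : ℕ} (x : X.carrier) (t : Fin N → K)
    (ht : ∀ i, ‖t i‖ ≤ 1) (i : Fin X.m) :
    (extendPt X N x t ht).1.1 (Fin.castAdd N i) = x.1.1 i := Fin.append_left _ _ i

lemma extendPt_coord_nat {N : ℕ} (x : X.carrier) (t : Fin N → K)
    (ht : ∀ i, ‖t i‖ ≤ 1) (s : Fin N) :
    (extendPt X N x t ht).1.1 (Fin.natAdd X.m s) = t s := Fin.append_right _ _ s

lemma proj_extendPt {N : ℕ} (x : X.carrier) (t : Fin N → K) (ht : ∀ i, ‖t i‖ ≤ 1) :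
    X.projFun N (extendPt X N x t ht) = x := by
  apply Subtype.ext; apply Subtype.ext; funext i
  exact Fin.append_left _ _ i

lemma proj_coord {N : ℕ} (z : (X.prod K N).carrier) (i : Fin X.m) :
    (X.projFun N z).1.1 i = z.1.1 (Fin.castAdd N i) := rfl

/-! ### A convenient inductive class of semianalytic sets -/

variable (X) in
/-- Closure of the basic norm-comparison sets under finite intersections and unions. -/
inductive SA : Set X.carrier → Prop
  | le (p q : X.O) : SA {x | ‖(p : X.carrier → K) x‖ ≤ ‖(q : X.carrier → K) x‖}
  | lt (p q : X.O) : SA {x | ‖(p : X.carrier → K) x‖ < ‖(q : X.carrier → K) x‖}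
  | inter {s t : Set X.carrier} : SA s → SA t → SA (s ∩ t)
  | union {s t : Set X.carrier} : SA s → SA t → SA (s ∪ t)

lemma SA.of_eq {s t : Set X.carrier} (h : SA X s) (he : s = t) : SA X t := he ▸ h

lemma SA.univ : SA X Set.univ := by
  refine (SA.le (0 : X.O) 0).of_eq ?_
  ext x; simp

lemma SA.empty : SA X (∅ : Set X.carrier) := by
  refine (SA.lt (0 : X.O) 0).of_eq ?_
  ext x; simp

lemma SA.iInter {n : ℕ} {C : Fin n → Set X.carrier} (h : ∀ i, SA X (C i)) :
    SA X (⋂ i, C i) := by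
  induction n with
  | zero => exact SA.univ.of_eq (by simp)
  | succ n ih =>
    have : (⋂ i, C i) = C 0 ∩ ⋂ i : Fin n, C i.succ := by
      ext x
      simp only [Set.mem_iInter, Set.mem_inter_iff]
      constructor
      · exact fun hx => ⟨hx 0, fun i => hx i.succ⟩
      · rintro ⟨h0, hs⟩ i
        rcases Fin.eq_zero_or_eq_succ i with rfl | ⟨j, rfl⟩
        · exact h0
        · exact hs j
    exact (SA.inter (h 0) (ih fun i => h i.succ)).of_eq this.symm

lemma SA.preimage_prodMap {N N' : ℕ} (ρ : Fin (X.m + N') → Fin (X.m + N))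
    (hρ : ∀ i : Fin X.m, ρ (Fin.castAdd N' i) = Fin.castAdd N i)
    {T : Set (X.prod K N').carrier} (hT : SA (X.prod K N') T) :
    SA (X.prod K N) (prodMap X ρ hρ ⁻¹' T) := by
  induction hT with
  | le p q =>
    refine (SA.le ⟨_, comp_prodMap_mem_O ρ hρ p⟩ ⟨_, comp_prodMap_mem_O ρ hρ q⟩).of_eq ?_
    rfl
  | lt p q =>
    refine (SA.lt ⟨_, comp_prodMap_mem_O ρ hρ p⟩ ⟨_, comp_prodMap_mem_O ρ hρ q⟩).of_eq ?_
    rfl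
  | inter _ _ ih1 ih2 => exact (ih1.inter ih2).of_eq (Set.preimage_inter).symm
  | union _ _ ih1 ih2 => exact (ih1.union ih2).of_eq (Set.preimage_union).symm

/-! ### Combining points over a common base -/

/-- Left reindexing `Fin (m + N₁) → Fin (m + (N₁ + N₂))`. -/
def ρL (X : Affinoid K) (N1 N2 : ℕ) : Fin (X.m + N1) → Fin (X.m + (N1 + N2)) :=
  Fin.addCases (fun i => Fin.castAdd (N1 + N2) i)
    (fun t => Fin.natAdd X.m (Fin.castAdd N2 t))

/-- Right reindexing `Fin (m + N₂) → Fin (m + (N₁ + N₂))`. -/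
def ρR (X : Affinoid K) (N1 N2 : ℕ) : Fin (X.m + N2) → Fin (X.m + (N1 + N2)) :=
  Fin.addCases (fun i => Fin.castAdd (N1 + N2) i)
    (fun t => Fin.natAdd X.m (Fin.natAdd N1 t))

lemma ρL_cast (N1 N2 : ℕ) (i : Fin X.m) :
    ρL X N1 N2 (Fin.castAdd N1 i) = Fin.castAdd (N1 + N2) i := Fin.addCases_left i

lemma ρL_nat (N1 N2 : ℕ) (t : Fin N1) :
    ρL X N1 N2 (Fin.natAdd X.m t) = Fin.natAdd X.m (Fin.castAdd N2 t) := Fin.addCases_right t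

lemma ρR_cast (N1 N2 : ℕ) (i : Fin X.m) :
    ρR X N1 N2 (Fin.castAdd N2 i) = Fin.castAdd (N1 + N2) i := Fin.addCases_left i

lemma ρR_nat (N1 N2 : ℕ) (t : Fin N2) :
    ρR X N1 N2 (Fin.natAdd X.m t) = Fin.natAdd X.m (Fin.natAdd N1 t) := Fin.addCases_right t

/-- Projection `X × R^{N₁+N₂} → X × R^{N₁}`. -/
def mapL (X : Affinoid K) (N1 N2 : ℕ) :
    (X.prod K (N1 + N2)).carrier → (X.prod K N1).carrier :=
  prodMap X (ρL X N1 N2) (ρL_cast N1 N2)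

/-- Projection `X × R^{N₁+N₂} → X × R^{N₂}`. -/
def mapR (X : Affinoid K) (N1 N2 : ℕ) :
    (X.prod K (N1 + N2)).carrier → (X.prod K N2).carrier :=
  prodMap X (ρR X N1 N2) (ρR_cast N1 N2)

/-- A point of `X × R^{N₁+N₂}` combining points of `X × R^{N₁}` and `X × R^{N₂}`
lying over the same point of `X`. -/
def combinePt {N1 N2 : ℕ} (z1 : (X.prod K N1).carrier) (z2 : (X.prod K N2).carrier) :
    (X.prod K (N1 + N2)).carrier :=
  extendPt X (N1 + N2) (X.projFun N1 z1)
    (Fin.append (fun t => z1.1.1 (Fin.natAdd X.m t)) (fun t => z2.1.1 (Fin.natAdd X.m t)))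
    (by
      intro i
      refine Fin.addCases (motive := fun i => ‖Fin.append (fun t => z1.1.1 (Fin.natAdd X.m t))
        (fun t => z2.1.1 (Fin.natAdd X.m t)) i‖ ≤ 1) (fun t => ?_) (fun t => ?_) i
      · simp only [Fin.append_left]; exact z1.1.2 _
      · simp only [Fin.append_right]; exact z2.1.2 _)

lemma combinePt_proj {N1 N2 : ℕ} (z1 : (X.prod K N1).carrier) (z2 : (X.prod K N2).carrier) :
    X.projFun (N1 + N2) (combinePt z1 z2) = X.projFun N1 z1 := proj_extendPt _ _ _

lemma combinePt_mapL {N1 N2 : ℕ} (z1 : (X.prod K N1).carrier) (z2 : (X.prod K N2).carrier) :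
    mapL X N1 N2 (combinePt z1 z2) = z1 := by
  apply Subtype.ext; apply Subtype.ext; funext k
  show (combinePt z1 z2).1.1 (ρL X N1 N2 k) = z1.1.1 k
  refine Fin.addCases (motive := fun k => (combinePt z1 z2).1.1 (ρL X N1 N2 k) = z1.1.1 k)
    (fun i => ?_) (fun t => ?_) k
  · simp only [combinePt, ρL_cast, extendPt_coord_cast]
    rfl
  · simp only [combinePt, ρL_nat, extendPt_coord_nat, Fin.append_left]

lemma combinePt_mapR {N1 N2 : ℕ} (z1 : (X.prod K N1).carrier) (z2 : (X.prod K N2).carrier)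
    (hx : X.projFun N1 z1 = X.projFun N2 z2) :
    mapR X N1 N2 (combinePt z1 z2) = z2 := by
  apply Subtype.ext; apply Subtype.ext; funext k
  show (combinePt z1 z2).1.1 (ρR X N1 N2 k) = z2.1.1 k
  refine Fin.addCases (motive := fun k => (combinePt z1 z2).1.1 (ρR X N1 N2 k) = z2.1.1 k)
    (fun i => ?_) (fun t => ?_) k
  · simp only [combinePt, ρR_cast, extendPt_coord_cast, hx]
    rfl
  · simp only [combinePt, ρR_nat, extendPt_coord_nat, Fin.append_right]

/-- The point `(x, 0) ∈ X × R^N`. -/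
def zeroPt (x : X.carrier) (N : ℕ) : (X.prod K N).carrier :=
  extendPt X N x (fun _ => 0) (fun _ => by simp)

lemma zeroPt_proj (x : X.carrier) (N : ℕ) : X.projFun N (zeroPt x N) = x := proj_extendPt _ _ _

/-! ### Adding one coordinate -/

/-- Reindexing `Fin (m + M) → Fin (m + (M + 1))` forgetting the last coordinate. -/
def forgetρ (X : Affinoid K) (M : ℕ) : Fin (X.m + M) → Fin (X.m + (M + 1)) :=
  Fin.addCases (fun i => Fin.castAdd (M + 1) i) (fun t => Fin.natAdd X.m (Fin.castAdd 1 t))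

lemma forgetρ_cast (M : ℕ) (i : Fin X.m) :
    forgetρ X M (Fin.castAdd M i) = Fin.castAdd (M + 1) i := Fin.addCases_left i

/-- The map `X × R^{M+1} → X × R^M` forgetting the last coordinate. -/
def forgetMap (X : Affinoid K) (M : ℕ) :
    (X.prod K (M + 1)).carrier → (X.prod K M).carrier :=
  prodMap X (forgetρ X M) (forgetρ_cast M)

lemma forgetMap_proj {M : ℕ} (z : (X.prod K (M + 1)).carrier) :
    X.projFun M (forgetMap X M z) = X.projFun (M + 1) z := prodMap_proj _ _ z

lemma forgetMap_coord {M : ℕ} (z : (X.prod K (M + 1)).carrier) (s : Fin M) :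
    (forgetMap X M z).1.1 (Fin.natAdd X.m s) = z.1.1 (Fin.natAdd X.m (Fin.castAdd 1 s)) := by
  show z.1.1 (forgetρ X M (Fin.natAdd X.m s)) = _
  rw [show forgetρ X M (Fin.natAdd X.m s) = Fin.natAdd X.m (Fin.castAdd 1 s) from
    Fin.addCases_right s]

/-- The point of `X × R^{M+1}` extending `z ∈ X × R^M` by the value `w`. -/
def snocPt {M : ℕ} (z : (X.prod K M).carrier) (w : K) (hw : ‖w‖ ≤ 1) :
    (X.prod K (M + 1)).carrier :=
  extendPt X (M + 1) (X.projFun M z)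
    (Fin.append (fun s => z.1.1 (Fin.natAdd X.m s)) (fun _ : Fin 1 => w))
    (by
      intro i
      refine Fin.addCases (motive := fun i => ‖Fin.append (fun s => z.1.1 (Fin.natAdd X.m s))
        (fun _ : Fin 1 => w) i‖ ≤ 1) (fun t => ?_) (fun t => ?_) i
      · simp only [Fin.append_left]; exact z.1.2 _
      · simp only [Fin.append_right]; exact hw)

lemma snocPt_proj {M : ℕ} (z : (X.prod K M).carrier) (w : K) (hw : ‖w‖ ≤ 1) :
    X.projFun (M + 1) (snocPt z w hw) = X.projFun M z := proj_extendPt _ _ _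

lemma snocPt_last {M : ℕ} (z : (X.prod K M).carrier) (w : K) (hw : ‖w‖ ≤ 1) :
    (snocPt z w hw).1.1 (Fin.natAdd X.m (Fin.natAdd M (0 : Fin 1))) = w := by
  simp only [snocPt, extendPt_coord_nat, Fin.append_right]

lemma snocPt_forget {M : ℕ} (z : (X.prod K M).carrier) (w : K) (hw : ‖w‖ ≤ 1) :
    forgetMap X M (snocPt z w hw) = z := by
  apply Subtype.ext; apply Subtype.ext; funext k
  show (snocPt z w hw).1.1 (forgetρ X M k) = z.1.1 k
  refine Fin.addCases (motive := fun k => (snocPt z w hw).1.1 (forgetρ X M k) = z.1.1 k)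
    (fun i => ?_) (fun t => ?_) k
  · simp only [forgetρ_cast, snocPt, extendPt_coord_cast]
    rfl
  · simp only [forgetρ, Fin.addCases_right, snocPt, extendPt_coord_nat, Fin.append_left]

/-- Extending a set `T ⊆ X × R^M` by one new coordinate whose value is prescribed by an
analytic function `G` bounded by `1` on `T`. -/
lemma rep_extend {M : ℕ} {T : Set (X.prod K M).carrier} (hSA : SA (X.prod K M) T)
    (hsurj : ∀ x, ∃ z ∈ T, X.projFun M z = x) (G : (X.prod K M).O)
    (hb : ∀ z ∈ T, ‖(G : (X.prod K M).carrier → K) z‖ ≤ 1) :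
    ∃ T' : Set (X.prod K (M + 1)).carrier, SA (X.prod K (M + 1)) T' ∧
      (∀ x, ∃ z' ∈ T', X.projFun (M + 1) z' = x) ∧
      (∀ z' ∈ T', forgetMap X M z' ∈ T ∧
        z'.1.1 (Fin.natAdd X.m (Fin.natAdd M (0 : Fin 1)))
          = (G : (X.prod K M).carrier → K) (forgetMap X M z')) := by
  set Gf : (X.prod K M).carrier → K := (G : (X.prod K M).carrier → K) with hGf
  have hGbig : (fun z' : (X.prod K (M+1)).carrier =>
      Gf (forgetMap X M z') - z'.1.1 (Fin.natAdd X.m (Fin.natAdd M (0 : Fin 1))))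
      ∈ (X.prod K (M + 1)).O := by
    refine Subalgebra.sub_mem _ (comp_prodMap_mem_O _ _ G) ?_
    exact coord_mem_O (X.prod K (M+1)) (Fin.natAdd X.m (Fin.natAdd M (0 : Fin 1)))
  set Gbig : (X.prod K (M+1)).O := ⟨_, hGbig⟩ with hGbigdef
  refine ⟨forgetMap X M ⁻¹' T ∩
    {z' | ‖(Gbig : (X.prod K (M+1)).carrier → K) z'‖
      ≤ ‖((0 : (X.prod K (M+1)).O) : (X.prod K (M+1)).carrier → K) z'‖}, ?_, ?_, ?_⟩
  · exact (SA.preimage_prodMap _ _ hSA).inter (SA.le Gbig 0)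
  · intro x
    obtain ⟨z, hzT, hzx⟩ := hsurj x
    refine ⟨snocPt z (Gf z) (hb z hzT), ⟨?_, ?_⟩, ?_⟩
    · show forgetMap X M _ ∈ T
      rw [snocPt_forget]; exact hzT
    · show ‖(Gbig : (X.prod K (M+1)).carrier → K) _‖ ≤ _
      have : (Gbig : (X.prod K (M+1)).carrier → K) (snocPt z (Gf z) (hb z hzT)) = 0 := by
        show Gf (forgetMap X M _) - _ = 0
        rw [snocPt_forget, snocPt_last, sub_self]
      rw [this]
      simp
    · rw [snocPt_proj, hzx]
  · rintro z' ⟨hz1, hz2⟩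
    refine ⟨hz1, ?_⟩
    have h0 : (Gbig : (X.prod K (M+1)).carrier → K) z' = 0 := by
      have := hz2
      simp only [Set.mem_setOf_eq, ZeroMemClass.coe_zero, Pi.zero_apply, norm_zero] at this
      exact norm_le_zero_iff.1 this
    have : Gf (forgetMap X M z') - z'.1.1 (Fin.natAdd X.m (Fin.natAdd M (0 : Fin 1))) = 0 := h0
    exact (sub_eq_zero.1 this).symm

/-! ### Small constants -/

lemma norm_le_one_or_small :
    (∀ a : K, ‖a‖ ≤ 1) ∨ (∀ ε : ℝ, 0 < ε → ∃ c : K, c ≠ 0 ∧ ‖c‖ ≤ ε) := by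
  by_cases h : ∃ a : K, 1 < ‖a‖
  · obtain ⟨a, ha⟩ := h
    have ha0 : a ≠ 0 := by
      intro h0; rw [h0, norm_zero] at ha; linarith
    right
    intro ε hε
    have hinv : ‖a⁻¹‖ < 1 := by
      rw [norm_inv]
      rw [inv_lt_one_iff₀]
      right; exact ha
    obtain ⟨n, hn⟩ := exists_pow_lt_of_lt_one hε hinv
    exact ⟨(a⁻¹) ^ n, pow_ne_zero _ (inv_ne_zero ha0), by rw [norm_pow]; exact le_of_lt hn⟩
  · left
    push_neg at h
    exact h

lemma exists_scale (b : ℝ) : ∃ c : K, c ≠ 0 ∧ ‖c‖ ≤ 1 ∧ ∀ x : K, ‖x‖ ≤ b → ‖c * x‖ ≤ 1 := by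
  rcases norm_le_one_or_small (K := K) with h | h
  · exact ⟨1, one_ne_zero, by simp, fun x _ => h _⟩
  · have hpos : 0 < max b 1 := lt_of_lt_of_le one_pos (le_max_right _ _)
    obtain ⟨c, hc0, hc⟩ := h (max b 1)⁻¹ (by positivity)
    refine ⟨c, hc0, le_trans hc (by rw [inv_le_one_iff₀]; right; exact le_max_right _ _),
      fun x hx => ?_⟩
    rw [norm_mul]
    calc ‖c‖ * ‖x‖ ≤ (max b 1)⁻¹ * max b 1 := by
          apply mul_le_mul hc (le_trans hx (le_max_left _ _)) (norm_nonneg _)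
          positivity
      _ = 1 := inv_mul_cancel₀ (ne_of_gt hpos)

lemma O_bound {X' : Affinoid K} (p : X'.O) :
    ∃ b : ℝ, ∀ x, ‖(p : X'.carrier → K) x‖ ≤ b := by
  obtain ⟨f, _, hfp⟩ := Subalgebra.mem_map.1 p.2
  refine ⟨‖f‖, fun x => ?_⟩
  rw [← hfp]
  exact BoundedContinuousFunction.norm_coe_le_norm f x.1

/-! ### Representability of functions by coordinates on semianalytic graphs -/

variable (X) in
/-- `f : X → K` is representable if, after multiplying by a nonzero constant, it is the
restriction of a coordinate function to a semianalytic subset of some `X × R^N` mapping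
onto `X`. -/
def Rep (f : X.carrier → K) : Prop :=
  ∃ (N : ℕ) (c : K) (T : Set (X.prod K N).carrier) (j : Fin N),
    c ≠ 0 ∧ SA (X.prod K N) T ∧
    (∀ x, ∃ z ∈ T, X.projFun N z = x) ∧
    (∀ z ∈ T, z.1.1 (Fin.natAdd X.m j) = c * f (X.projFun N z))

lemma Rep.congr {f g : X.carrier → K} (hf : Rep X f) (h : ∀ x, f x = g x) : Rep X g := by
  obtain ⟨N, c, T, j, hc, hSA, hsurj, hid⟩ := hf
  exact ⟨N, c, T, j, hc, hSA, hsurj, fun z hz => by rw [hid z hz, h]⟩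

lemma Rep.joint {n : ℕ} (f : Fin n → (X.carrier → K)) (h : ∀ i, Rep X (f i)) :
    ∃ (M : ℕ) (c : Fin n → K) (T : Set (X.prod K M).carrier) (j : Fin n → Fin M),
      (∀ i, c i ≠ 0) ∧ SA (X.prod K M) T ∧ (∀ x, ∃ z ∈ T, X.projFun M z = x) ∧
      (∀ z ∈ T, ∀ i, z.1.1 (Fin.natAdd X.m (j i)) = c i * f i (X.projFun M z)) := by
  induction n with
  | zero =>
    refine ⟨0, Fin.elim0, Set.univ, Fin.elim0, fun i => i.elim0, SA.univ, ?_, ?_⟩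
    · exact fun x => ⟨zeroPt x 0, Set.mem_univ _, zeroPt_proj x 0⟩
    · exact fun z _ i => i.elim0
  | succ n ih =>
    obtain ⟨M1, c1, T1, j1, hc1, hSA1, hsurj1, hid1⟩ :=
      ih (fun i => f i.castSucc) (fun i => h i.castSucc)
    obtain ⟨N2, c2, T2, j2, hc2, hSA2, hsurj2, hid2⟩ := h (Fin.last n)
    refine ⟨M1 + N2, Fin.snoc c1 c2, mapL X M1 N2 ⁻¹' T1 ∩ mapR X M1 N2 ⁻¹' T2,
      Fin.snoc (fun i => Fin.castAdd N2 (j1 i)) (Fin.natAdd M1 j2), ?_, ?_, ?_, ?_⟩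
    · intro i
      induction i using Fin.lastCases with
      | last => simpa using hc2
      | cast i => simpa using hc1 i
    · exact (SA.preimage_prodMap _ _ hSA1).inter (SA.preimage_prodMap _ _ hSA2)
    · intro x
      obtain ⟨z1, hz1, hz1x⟩ := hsurj1 x
      obtain ⟨z2, hz2, hz2x⟩ := hsurj2 x
      have hx : X.projFun M1 z1 = X.projFun N2 z2 := hz1x.trans hz2x.symm
      refine ⟨combinePt z1 z2, ⟨?_, ?_⟩, (combinePt_proj z1 z2).trans hz1x⟩
      · show mapL X M1 N2 (combinePt z1 z2) ∈ T1
        rw [combinePt_mapL]; exact hz1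
      · show mapR X M1 N2 (combinePt z1 z2) ∈ T2
        rw [combinePt_mapR z1 z2 hx]; exact hz2
    · rintro z ⟨hzL, hzR⟩ i
      induction i using Fin.lastCases with
      | last =>
        simp only [Fin.snoc_last]
        have h1 : z.1.1 (Fin.natAdd X.m (Fin.natAdd M1 j2))
            = (mapR X M1 N2 z).1.1 (Fin.natAdd X.m j2) := by
          show _ = z.1.1 (ρR X M1 N2 (Fin.natAdd X.m j2))
          rw [ρR_nat]
        rw [h1, hid2 _ hzR,
          show X.projFun N2 (mapR X M1 N2 z) = X.projFun (M1+N2) z from prodMap_proj _ _ z]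
      | cast i =>
        simp only [Fin.snoc_castSucc]
        have h1 : z.1.1 (Fin.natAdd X.m (Fin.castAdd N2 (j1 i)))
            = (mapL X M1 N2 z).1.1 (Fin.natAdd X.m (j1 i)) := by
          show _ = z.1.1 (ρL X M1 N2 (Fin.natAdd X.m (j1 i)))
          rw [ρL_nat]
        rw [h1, hid1 _ hzL i,
          show X.projFun M1 (mapL X M1 N2 z) = X.projFun (M1+N2) z from prodMap_proj _ _ z]

lemma cancel_le {c d : K} (hc : c ≠ 0) (hd : d ≠ 0) (A B : K) :
    ‖d * (c * A)‖ ≤ ‖c * (d * B)‖ ↔ ‖A‖ ≤ ‖B‖ := by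
  rw [norm_mul, norm_mul, norm_mul, norm_mul, ← mul_assoc, ← mul_assoc, mul_comm ‖c‖ ‖d‖]
  exact mul_le_mul_iff_right₀ (mul_pos (norm_pos_iff.2 hd) (norm_pos_iff.2 hc))

lemma cancel_lt {c d : K} (hc : c ≠ 0) (hd : d ≠ 0) (A B : K) :
    ‖d * (c * A)‖ < ‖c * (d * B)‖ ↔ ‖A‖ < ‖B‖ := by
  rw [norm_mul, norm_mul, norm_mul, norm_mul, ← mul_assoc, ← mul_assoc, mul_comm ‖c‖ ‖d‖]
  exact mul_lt_mul_iff_right₀ (mul_pos (norm_pos_iff.2 hd) (norm_pos_iff.2 hc))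

/-- Exact joint representation of functions bounded by `1`. -/
lemma joint_exact {n : ℕ} (f : Fin n → (X.carrier → K)) (h : ∀ i, Rep X (f i))
    (hb : ∀ i x, ‖f i x‖ ≤ 1) :
    ∃ (M : ℕ) (T : Set (X.prod K M).carrier) (v : Fin n → Fin M),
      SA (X.prod K M) T ∧ (∀ x, ∃ z ∈ T, X.projFun M z = x) ∧
      (∀ z ∈ T, ∀ i, z.1.1 (Fin.natAdd X.m (v i)) = f i (X.projFun M z)) := by
  obtain ⟨M, c, T, j, hc, hSA, hsurj, hid⟩ := Rep.joint f h
  have key : ∀ k : ℕ, k ≤ n →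
      ∃ (M' : ℕ) (T' : Set (X.prod K M').carrier) (w : Fin n → Fin M')
        (v : Fin k → Fin M'),
        SA (X.prod K M') T' ∧ (∀ x, ∃ z ∈ T', X.projFun M' z = x) ∧
        (∀ z ∈ T', (∀ i, z.1.1 (Fin.natAdd X.m (w i)) = c i * f i (X.projFun M' z)) ∧
          (∀ i : Fin k, ∀ hk : k ≤ n,
            z.1.1 (Fin.natAdd X.m (v i)) = f (Fin.castLE hk i) (X.projFun M' z))) := by
    intro k
    induction k with
    | zero =>
      intro _
      exact ⟨M, T, j, Fin.elim0, hSA, hsurj, fun z hz => ⟨hid z hz, fun i => i.elim0⟩⟩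
    | succ k ih =>
      intro hk1
      obtain ⟨M', T', w, v, hSA', hsurj', hprop⟩ := ih (Nat.le_of_succ_le hk1)
      set i0 : Fin n := ⟨k, hk1⟩ with hi0
      set G : (X.prod K M').O := ⟨fun z => (c i0)⁻¹ * z.1.1 (Fin.natAdd X.m (w i0)),
        const_mul_mem_O _ (coord_mem_O _ _)⟩ with hG
      have hGb : ∀ z ∈ T', ‖(G : (X.prod K M').carrier → K) z‖ ≤ 1 := by
        intro z hz
        show ‖(c i0)⁻¹ * z.1.1 (Fin.natAdd X.m (w i0))‖ ≤ 1
        rw [(hprop z hz).1 i0, inv_mul_cancel_left₀ (hc i0)]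
        exact hb i0 _
      obtain ⟨T'', hSA'', hsurj'', hprop''⟩ := rep_extend hSA' hsurj' G hGb
      refine ⟨M' + 1, T'', fun i => Fin.castAdd 1 (w i),
        Fin.snoc (fun i => Fin.castAdd 1 (v i)) (Fin.natAdd M' (0 : Fin 1)),
        hSA'', hsurj'', ?_⟩
      intro z hz
      obtain ⟨hzT', hzG⟩ := hprop'' z hz
      have hcoord : ∀ s : Fin M',
          z.1.1 (Fin.natAdd X.m (Fin.castAdd 1 s)) = (forgetMap X M' z).1.1 (Fin.natAdd X.m s) :=
        fun s => (forgetMap_coord z s).symm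
      have hproj : X.projFun M' (forgetMap X M' z) = X.projFun (M' + 1) z := forgetMap_proj z
      constructor
      · intro i
        rw [hcoord (w i), (hprop _ hzT').1 i, hproj]
      · intro i hk
        induction i using Fin.lastCases with
        | last =>
          simp only [Fin.snoc_last]
          rw [hzG]
          show (c i0)⁻¹ * (forgetMap X M' z).1.1 (Fin.natAdd X.m (w i0)) = _
          rw [(hprop _ hzT').1 i0, inv_mul_cancel_left₀ (hc i0), hproj]
          rfl
        | cast i =>
          simp only [Fin.snoc_castSucc]
          rw [hcoord (v i), (hprop _ hzT').2 i (Nat.le_of_succ_le hk), hproj]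
          rfl
  obtain ⟨M', T', w, v, hSA', hsurj', hprop⟩ := key n le_rfl
  refine ⟨M', T', v, hSA', hsurj', fun z hz i => ?_⟩
  have := (hprop z hz).2 i le_rfl
  rwa [show Fin.castLE le_rfl i = i from rfl] at this

/-- Every `D`-function is representable. -/
lemma isDFun_rep {f : X.carrier → K} (hf : IsDFun X f) : Rep X f := by
  induction hf with
  | base p =>
    obtain ⟨b, hbb⟩ := O_bound p
    obtain ⟨cc, hcc0, _, hccb⟩ := exists_scale (K := K) b
    set G : (X.prod K 0).O := ⟨fun z => cc * (p : X.carrier → K) (X.projFun 0 z),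
      const_mul_mem_O _ (comp_proj_mem_O p)⟩ with hGdef
    have hGb : ∀ z ∈ (Set.univ : Set (X.prod K 0).carrier),
        ‖(G : (X.prod K 0).carrier → K) z‖ ≤ 1 :=
      fun z _ => hccb _ (hbb _)
    obtain ⟨T', hSA', hsurj', hprop'⟩ := rep_extend SA.univ
      (fun x => ⟨zeroPt x 0, Set.mem_univ _, zeroPt_proj x 0⟩) G hGb
    refine ⟨0 + 1, cc, T', Fin.natAdd 0 (0 : Fin 1), hcc0, hSA', hsurj', ?_⟩
    intro z hz
    rw [(hprop' z hz).2]
    show cc * (p : X.carrier → K) (X.projFun 0 (forgetMap X 0 z)) = _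
    rw [forgetMap_proj]
  | @smul c' p hp ih =>
    by_cases hc' : c' = 0
    · subst hc'
      set G : (X.prod K 0).O := (0 : (X.prod K 0).O) with hGdef
      have hGb : ∀ z ∈ (Set.univ : Set (X.prod K 0).carrier),
          ‖(G : (X.prod K 0).carrier → K) z‖ ≤ 1 := by
        intro z _
        simp [hGdef]
      obtain ⟨T', hSA', hsurj', hprop'⟩ := rep_extend SA.univ
        (fun x => ⟨zeroPt x 0, Set.mem_univ _, zeroPt_proj x 0⟩) G hGb
      refine ⟨0 + 1, 1, T', Fin.natAdd 0 (0 : Fin 1), one_ne_zero, hSA', hsurj', ?_⟩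
      intro z hz
      rw [(hprop' z hz).2]
      show ((0 : (X.prod K 0).O) : (X.prod K 0).carrier → K) _ = _
      simp
    · obtain ⟨N, c, T, j, hc, hSA, hsurj, hid⟩ := ih
      refine ⟨N, c * c'⁻¹, T, j, mul_ne_zero hc (inv_ne_zero hc'), hSA, hsurj, ?_⟩
      intro z hz
      rw [hid z hz, Pi.smul_apply, smul_eq_mul]
      field_simp
  | @add p q hp hq ihp ihq =>
    have h2 : ∀ i : Fin 2, Rep X (![p, q] i) := by
      intro i
      fin_cases i
      · simpa using ihp
      · simpa using ihq
    obtain ⟨M, c, T, j, hc, hSA, hsurj, hid⟩ := Rep.joint ![p, q] h2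
    have hid0 : ∀ z ∈ T, z.1.1 (Fin.natAdd X.m (j 0)) = c 0 * p (X.projFun M z) :=
      fun z hz => by simpa using hid z hz 0
    have hid1 : ∀ z ∈ T, z.1.1 (Fin.natAdd X.m (j 1)) = c 1 * q (X.projFun M z) :=
      fun z hz => by simpa using hid z hz 1
    obtain ⟨e, he0, he1, heb⟩ := exists_scale (K := K) (max ‖c 0‖ ‖c 1‖)
    set G : (X.prod K M).O := ⟨fun z => e * c 1 * z.1.1 (Fin.natAdd X.m (j 0))
        + e * c 0 * z.1.1 (Fin.natAdd X.m (j 1)),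
      Subalgebra.add_mem _ (const_mul_mem_O _ (coord_mem_O _ _))
        (const_mul_mem_O _ (coord_mem_O _ _))⟩ with hGdef
    have hGb : ∀ z ∈ T, ‖(G : (X.prod K M).carrier → K) z‖ ≤ 1 := by
      intro z _
      refine le_trans (IsUltrametricDist.norm_add_le_max _ _) (max_le ?_ ?_)
      · rw [show e * c 1 * z.1.1 (Fin.natAdd X.m (j 0))
            = e * (c 1 * z.1.1 (Fin.natAdd X.m (j 0))) by ring, norm_mul (e) _, norm_mul]
        calc ‖e‖ * (‖c 1‖ * ‖z.1.1 (Fin.natAdd X.m (j 0))‖)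
            ≤ ‖e‖ * (‖c 1‖ * 1) := by
              apply mul_le_mul_of_nonneg_left _ (norm_nonneg e)
              exact mul_le_mul_of_nonneg_left (z.1.2 _) (norm_nonneg _)
          _ = ‖e * c 1‖ := by rw [norm_mul]; ring
          _ ≤ 1 := heb _ (le_max_right _ _)
      · rw [show e * c 0 * z.1.1 (Fin.natAdd X.m (j 1))
            = e * (c 0 * z.1.1 (Fin.natAdd X.m (j 1))) by ring, norm_mul (e) _, norm_mul]
        calc ‖e‖ * (‖c 0‖ * ‖z.1.1 (Fin.natAdd X.m (j 1))‖)
            ≤ ‖e‖ * (‖c 0‖ * 1) := by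
              apply mul_le_mul_of_nonneg_left _ (norm_nonneg e)
              exact mul_le_mul_of_nonneg_left (z.1.2 _) (norm_nonneg _)
          _ = ‖e * c 0‖ := by rw [norm_mul]; ring
          _ ≤ 1 := heb _ (le_max_left _ _)
    obtain ⟨T', hSA', hsurj', hprop'⟩ := rep_extend hSA hsurj G hGb
    refine ⟨M + 1, e * c 0 * c 1, T', Fin.natAdd M (0 : Fin 1),
      mul_ne_zero (mul_ne_zero he0 (hc 0)) (hc 1), hSA', hsurj', ?_⟩
    intro z hz
    obtain ⟨hzT, hzG⟩ := hprop' z hz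
    rw [hzG]
    show e * c 1 * (forgetMap X M z).1.1 (Fin.natAdd X.m (j 0))
        + e * c 0 * (forgetMap X M z).1.1 (Fin.natAdd X.m (j 1)) = _
    rw [hid0 _ hzT, hid1 _ hzT, forgetMap_proj, Pi.add_apply]
    ring
  | @mul p q hp hq ihp ihq =>
    have h2 : ∀ i : Fin 2, Rep X (![p, q] i) := by
      intro i
      fin_cases i
      · simpa using ihp
      · simpa using ihq
    obtain ⟨M, c, T, j, hc, hSA, hsurj, hid⟩ := Rep.joint ![p, q] h2
    have hid0 : ∀ z ∈ T, z.1.1 (Fin.natAdd X.m (j 0)) = c 0 * p (X.projFun M z) :=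
      fun z hz => by simpa using hid z hz 0
    have hid1 : ∀ z ∈ T, z.1.1 (Fin.natAdd X.m (j 1)) = c 1 * q (X.projFun M z) :=
      fun z hz => by simpa using hid z hz 1
    set G : (X.prod K M).O := ⟨fun z => z.1.1 (Fin.natAdd X.m (j 0))
        * z.1.1 (Fin.natAdd X.m (j 1)),
      Subalgebra.mul_mem _ (coord_mem_O _ _) (coord_mem_O _ _)⟩ with hGdef
    have hGb : ∀ z ∈ T, ‖(G : (X.prod K M).carrier → K) z‖ ≤ 1 := by
      intro z _
      show ‖_ * _‖ ≤ 1
      rw [norm_mul]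
      exact mul_le_one₀ (z.1.2 _) (norm_nonneg _) (z.1.2 _)
    obtain ⟨T', hSA', hsurj', hprop'⟩ := rep_extend hSA hsurj G hGb
    refine ⟨M + 1, c 0 * c 1, T', Fin.natAdd M (0 : Fin 1),
      mul_ne_zero (hc 0) (hc 1), hSA', hsurj', ?_⟩
    intro z hz
    obtain ⟨hzT, hzG⟩ := hprop' z hz
    rw [hzG]
    show (forgetMap X M z).1.1 (Fin.natAdd X.m (j 0))
        * (forgetMap X M z).1.1 (Fin.natAdd X.m (j 1)) = _
    rw [hid0 _ hzT, hid1 _ hzT, forgetMap_proj, Pi.mul_apply]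
    ring
  | @div p q hp hq ihp ihq =>
    have h2 : ∀ i : Fin 2, Rep X (![p, q] i) := by
      intro i
      fin_cases i
      · simpa using ihp
      · simpa using ihq
    obtain ⟨M, c, T, j, hc, hSA, hsurj, hid⟩ := Rep.joint ![p, q] h2
    have hid0 : ∀ z ∈ T, z.1.1 (Fin.natAdd X.m (j 0)) = c 0 * p (X.projFun M z) :=
      fun z hz => by simpa using hid z hz 0
    have hid1 : ∀ z ∈ T, z.1.1 (Fin.natAdd X.m (j 1)) = c 1 * q (X.projFun M z) :=
      fun z hz => by simpa using hid z hz 1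
    set U : (X.prod K (M + 1)).O :=
      ⟨fun z => z.1.1 (Fin.natAdd X.m (Fin.castAdd 1 (j 0))), coord_mem_O _ _⟩ with hUdef
    set V : (X.prod K (M + 1)).O :=
      ⟨fun z => z.1.1 (Fin.natAdd X.m (Fin.castAdd 1 (j 1))), coord_mem_O _ _⟩ with hVdef
    set W : (X.prod K (M + 1)).O :=
      ⟨fun z => z.1.1 (Fin.natAdd X.m (Fin.natAdd M (0 : Fin 1))), coord_mem_O _ _⟩ with hWdef
    set c1U : (X.prod K (M + 1)).O :=
      ⟨fun z => c 1 * z.1.1 (Fin.natAdd X.m (Fin.castAdd 1 (j 0))),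
        const_mul_mem_O _ (coord_mem_O _ _)⟩ with hc1Udef
    set c0V : (X.prod K (M + 1)).O :=
      ⟨fun z => c 0 * z.1.1 (Fin.natAdd X.m (Fin.castAdd 1 (j 1))),
        const_mul_mem_O _ (coord_mem_O _ _)⟩ with hc0Vdef
    set E1 : (X.prod K (M + 1)).O :=
      ⟨fun z => c 0 * (z.1.1 (Fin.natAdd X.m (Fin.natAdd M (0 : Fin 1)))
          * z.1.1 (Fin.natAdd X.m (Fin.castAdd 1 (j 1))))
        - c 1 * z.1.1 (Fin.natAdd X.m (Fin.castAdd 1 (j 0))),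
        Subalgebra.sub_mem _
          (const_mul_mem_O _ (Subalgebra.mul_mem _ (coord_mem_O _ _) (coord_mem_O _ _)))
          (const_mul_mem_O _ (coord_mem_O _ _))⟩ with hE1def
    set Z : (X.prod K (M + 1)).O := (0 : (X.prod K (M + 1)).O) with hZdef
    have hZ0 : ∀ z, (Z : (X.prod K (M + 1)).carrier → K) z = 0 := by
      intro z; simp [hZdef]
    have hUV : ∀ z' : (X.prod K (M + 1)).carrier, forgetMap X M z' ∈ T →
        (U : (X.prod K (M + 1)).carrier → K) z' = c 0 * p (X.projFun (M + 1) z')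
          ∧ (V : (X.prod K (M + 1)).carrier → K) z' = c 1 * q (X.projFun (M + 1) z') := by
      intro z' hz'
      constructor
      · show z'.1.1 (Fin.natAdd X.m (Fin.castAdd 1 (j 0))) = _
        rw [← forgetMap_coord, hid0 _ hz', forgetMap_proj]
      · show z'.1.1 (Fin.natAdd X.m (Fin.castAdd 1 (j 1))) = _
        rw [← forgetMap_coord, hid1 _ hz', forgetMap_proj]
    refine ⟨M + 1, 1,
      (forgetMap X M ⁻¹' T) ∩
        ((({z | ‖(c1U : (X.prod K (M + 1)).carrier → K) z‖
              ≤ ‖(c0V : (X.prod K (M + 1)).carrier → K) z‖}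
            ∩ {z | ‖(Z : (X.prod K (M + 1)).carrier → K) z‖
              < ‖(V : (X.prod K (M + 1)).carrier → K) z‖})
          ∩ {z | ‖(E1 : (X.prod K (M + 1)).carrier → K) z‖
              ≤ ‖(Z : (X.prod K (M + 1)).carrier → K) z‖})
        ∪ (({z | ‖(c0V : (X.prod K (M + 1)).carrier → K) z‖
              < ‖(c1U : (X.prod K (M + 1)).carrier → K) z‖}
            ∪ {z | ‖(V : (X.prod K (M + 1)).carrier → K) z‖
              ≤ ‖(Z : (X.prod K (M + 1)).carrier → K) z‖})
          ∩ {z | ‖(W : (X.prod K (M + 1)).carrier → K) z‖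
              ≤ ‖(Z : (X.prod K (M + 1)).carrier → K) z‖})),
      Fin.natAdd M (0 : Fin 1), one_ne_zero, ?_, ?_, ?_⟩
    · refine (SA.preimage_prodMap _ _ hSA).inter (SA.union ?_ ?_)
      · exact ((SA.le c1U c0V).inter (SA.lt Z V)).inter (SA.le E1 Z)
      · exact ((SA.lt c0V c1U).union (SA.le V Z)).inter (SA.le W Z)
    · intro x
      obtain ⟨z, hzT, hzx⟩ := hsurj x
      by_cases hcase : ‖p x‖ ≤ ‖q x‖ ∧ q x ≠ 0
      · have hw : ‖p x / q x‖ ≤ 1 := by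
          rw [norm_div]
          exact div_le_one_of_le₀ hcase.1 (norm_nonneg _)
        have hfz : forgetMap X M (snocPt z (p x / q x) hw) ∈ T := by
          rw [snocPt_forget]; exact hzT
        obtain ⟨hU', hV'⟩ := hUV _ hfz
        have hx' : X.projFun (M + 1) (snocPt z (p x / q x) hw) = x := by
          rw [snocPt_proj, hzx]
        rw [hx'] at hU' hV'
        have hWv : (W : (X.prod K (M + 1)).carrier → K) (snocPt z (p x / q x) hw)
            = p x / q x := snocPt_last z (p x / q x) hw
        have hUe : (c1U : (X.prod K (M + 1)).carrier → K) (snocPt z (p x / q x) hw)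
            = c 1 * ((U : (X.prod K (M + 1)).carrier → K) (snocPt z (p x / q x) hw)) := rfl
        have hVe : (c0V : (X.prod K (M + 1)).carrier → K) (snocPt z (p x / q x) hw)
            = c 0 * ((V : (X.prod K (M + 1)).carrier → K) (snocPt z (p x / q x) hw)) := rfl
        have hEe : (E1 : (X.prod K (M + 1)).carrier → K) (snocPt z (p x / q x) hw)
            = c 0 * ((W : (X.prod K (M + 1)).carrier → K) (snocPt z (p x / q x) hw)
                * ((V : (X.prod K (M + 1)).carrier → K) (snocPt z (p x / q x) hw)))
              - c 1 * ((U : (X.prod K (M + 1)).carrier → K) (snocPt z (p x / q x) hw)) := rfl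
        refine ⟨snocPt z (p x / q x) hw, ⟨hfz, Or.inl ⟨⟨?_, ?_⟩, ?_⟩⟩, hx'⟩
        · show ‖(c1U : (X.prod K (M + 1)).carrier → K) (snocPt z (p x / q x) hw)‖
            ≤ ‖(c0V : (X.prod K (M + 1)).carrier → K) (snocPt z (p x / q x) hw)‖
          rw [hUe, hVe, hU', hV']
          exact (cancel_le (hc 0) (hc 1) _ _).2 hcase.1
        · show ‖(Z : (X.prod K (M + 1)).carrier → K) (snocPt z (p x / q x) hw)‖
            < ‖(V : (X.prod K (M + 1)).carrier → K) (snocPt z (p x / q x) hw)‖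
          rw [hZ0, hV', norm_zero]
          exact norm_pos_iff.2 (mul_ne_zero (hc 1) hcase.2)
        · show ‖(E1 : (X.prod K (M + 1)).carrier → K) (snocPt z (p x / q x) hw)‖
            ≤ ‖(Z : (X.prod K (M + 1)).carrier → K) (snocPt z (p x / q x) hw)‖
          rw [hEe, hWv, hU', hV', hZ0, norm_zero]
          have hdiv : p x / q x * q x = p x := div_mul_cancel₀ _ hcase.2
          have h0 : c 0 * (p x / q x * (c 1 * q x)) - c 1 * (c 0 * p x) = 0 := by
            calc c 0 * (p x / q x * (c 1 * q x)) - c 1 * (c 0 * p x)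
                = c 0 * c 1 * (p x / q x * q x) - c 1 * (c 0 * p x) := by ring
              _ = 0 := by rw [hdiv]; ring
          rw [h0, norm_zero]
      · have h01 : ‖(0 : K)‖ ≤ 1 := by simp
        have hfz : forgetMap X M (snocPt z (0 : K) h01) ∈ T := by
          rw [snocPt_forget]; exact hzT
        obtain ⟨hU', hV'⟩ := hUV _ hfz
        have hx' : X.projFun (M + 1) (snocPt z (0 : K) h01) = x := by
          rw [snocPt_proj, hzx]
        rw [hx'] at hU' hV'
        have hWv : (W : (X.prod K (M + 1)).carrier → K) (snocPt z (0 : K) h01)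
            = 0 := snocPt_last z (0 : K) h01
        have hUe : (c1U : (X.prod K (M + 1)).carrier → K) (snocPt z (0 : K) h01)
            = c 1 * ((U : (X.prod K (M + 1)).carrier → K) (snocPt z (0 : K) h01)) := rfl
        have hVe : (c0V : (X.prod K (M + 1)).carrier → K) (snocPt z (0 : K) h01)
            = c 0 * ((V : (X.prod K (M + 1)).carrier → K) (snocPt z (0 : K) h01)) := rfl
        refine ⟨snocPt z (0 : K) h01, ⟨hfz, Or.inr ⟨?_, ?_⟩⟩, hx'⟩
        · by_cases hq0 : q x = 0
          · right
            show ‖(V : (X.prod K (M + 1)).carrier → K) (snocPt z (0 : K) h01)‖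
              ≤ ‖(Z : (X.prod K (M + 1)).carrier → K) (snocPt z (0 : K) h01)‖
            rw [hZ0, hV', hq0, mul_zero]
          · left
            show ‖(c0V : (X.prod K (M + 1)).carrier → K) (snocPt z (0 : K) h01)‖
              < ‖(c1U : (X.prod K (M + 1)).carrier → K) (snocPt z (0 : K) h01)‖
            rw [hUe, hVe, hU', hV']
            have hlt : ‖q x‖ < ‖p x‖ := by
              by_contra hle
              exact hcase ⟨le_of_not_gt hle, hq0⟩
            exact (cancel_lt (hc 1) (hc 0) _ _).2 hlt
        · show ‖(W : (X.prod K (M + 1)).carrier → K) (snocPt z (0 : K) h01)‖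
            ≤ ‖(Z : (X.prod K (M + 1)).carrier → K) (snocPt z (0 : K) h01)‖
          rw [hWv, hZ0]
    · rintro z' ⟨hzT, hC⟩
      obtain ⟨hU', hV'⟩ := hUV z' hzT
      set x := X.projFun (M + 1) z' with hxdef
      rw [one_mul]
      show (W : (X.prod K (M + 1)).carrier → K) z' = Ddiv (p x) (q x)
      rcases hC with ⟨⟨hle, hpos⟩, heq⟩ | ⟨hor, hW0⟩
      · have hle' : ‖p x‖ ≤ ‖q x‖ := by
          have h1 : ‖c 1 * ((U : (X.prod K (M + 1)).carrier → K) z')‖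
              ≤ ‖c 0 * ((V : (X.prod K (M + 1)).carrier → K) z')‖ := hle
          rw [hU', hV'] at h1
          exact (cancel_le (hc 0) (hc 1) _ _).1 h1
        have hq0 : q x ≠ 0 := by
          have h1 : ‖(Z : (X.prod K (M + 1)).carrier → K) z'‖
              < ‖(V : (X.prod K (M + 1)).carrier → K) z'‖ := hpos
          rw [hZ0, norm_zero, hV'] at h1
          intro h0
          rw [h0, mul_zero, norm_zero] at h1
          exact lt_irrefl 0 h1
        have hE0 : c 0 * ((W : (X.prod K (M + 1)).carrier → K) z'
              * ((V : (X.prod K (M + 1)).carrier → K) z'))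
            - c 1 * ((U : (X.prod K (M + 1)).carrier → K) z') = 0 := by
          have h1 : ‖(E1 : (X.prod K (M + 1)).carrier → K) z'‖
              ≤ ‖(Z : (X.prod K (M + 1)).carrier → K) z'‖ := heq
          rw [hZ0, norm_zero] at h1
          exact norm_le_zero_iff.1 h1
        rw [hU', hV'] at hE0
        have hWval : (W : (X.prod K (M + 1)).carrier → K) z' = p x / q x := by
          have hcc : c 0 * c 1 ≠ 0 := mul_ne_zero (hc 0) (hc 1)
          have h2 : (c 0 * c 1) * ((W : (X.prod K (M + 1)).carrier → K) z' * q x)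
              = (c 0 * c 1) * p x := by linear_combination hE0
          have h3 := mul_left_cancel₀ hcc h2
          rw [eq_div_iff hq0]
          exact h3
        rw [hWval, Ddiv, if_pos ⟨hle', hq0⟩]
      · have hW0' : (W : (X.prod K (M + 1)).carrier → K) z' = 0 := by
          have h1 : ‖(W : (X.prod K (M + 1)).carrier → K) z'‖
              ≤ ‖(Z : (X.prod K (M + 1)).carrier → K) z'‖ := hW0
          rw [hZ0, norm_zero] at h1
          exact norm_le_zero_iff.1 h1
        have hneg : ¬(‖p x‖ ≤ ‖q x‖ ∧ q x ≠ 0) := by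
          rcases hor with hlt | hV0
          · have h1 : ‖c 0 * ((V : (X.prod K (M + 1)).carrier → K) z')‖
                < ‖c 1 * ((U : (X.prod K (M + 1)).carrier → K) z')‖ := hlt
            rw [hU', hV'] at h1
            have h2 := (cancel_lt (hc 1) (hc 0) _ _).1 h1
            intro hcon
            exact absurd hcon.1 (not_le.2 h2)
          · have h1 : ‖(V : (X.prod K (M + 1)).carrier → K) z'‖
                ≤ ‖(Z : (X.prod K (M + 1)).carrier → K) z'‖ := hV0
            rw [hZ0, norm_zero, hV'] at h1
            have hq0 : q x = 0 := by
              have h2 := norm_le_zero_iff.1 h1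
              rcases mul_eq_zero.1 h2 with h | h
              · exact absurd h (hc 1)
              · exact h
            intro hcon
            exact hcon.2 hq0
        rw [hW0', Ddiv, if_neg hneg]
  | comp N p q hq hq1 ihq =>
    obtain ⟨M, T, v, hSA, hsurj, hid⟩ := joint_exact q ihq hq1
    set ρc : Fin (X.m + N) → Fin (X.m + M) :=
      Fin.addCases (fun i => Fin.castAdd M i) (fun i => Fin.natAdd X.m (v i)) with hρcdef
    have hρc : ∀ i : Fin X.m, ρc (Fin.castAdd N i) = Fin.castAdd M i := fun i =>
      Fin.addCases_left i
    obtain ⟨b, hbb⟩ := O_bound p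
    obtain ⟨cc, hcc0, _, hccb⟩ := exists_scale (K := K) b
    set G : (X.prod K M).O :=
      ⟨fun z => cc * (p : (X.prod K N).carrier → K) (prodMap X ρc hρc z),
        const_mul_mem_O _ (comp_prodMap_mem_O _ _ p)⟩ with hGdef
    have hGb : ∀ z ∈ T, ‖(G : (X.prod K M).carrier → K) z‖ ≤ 1 := fun z _ => hccb _ (hbb _)
    obtain ⟨T', hSA', hsurj', hprop'⟩ := rep_extend hSA hsurj G hGb
    refine ⟨M + 1, cc, T', Fin.natAdd M (0 : Fin 1), hcc0, hSA', hsurj', ?_⟩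
    intro z hz
    obtain ⟨hzT, hzG⟩ := hprop' z hz
    rw [hzG]
    show cc * (p : (X.prod K N).carrier → K) (prodMap X ρc hρc (forgetMap X M z)) = _
    congr 1
    set x := X.projFun (M + 1) z with hxdef
    have hmain : prodMap X ρc hρc (forgetMap X M z)
        = extendPt X N x (fun i => q i x) (fun i => hq1 i x) := by
      apply Subtype.ext; apply Subtype.ext; funext k
      show (forgetMap X M z).1.1 (ρc k) = _
      refine Fin.addCases (motive := fun k => (forgetMap X M z).1.1 (ρc k)
        = (extendPt X N x (fun i => q i x) (fun i => hq1 i x)).1.1 k)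
        (fun i => ?_) (fun i => ?_) k
      · simp only [hρc, extendPt_coord_cast]
        show (X.projFun M (forgetMap X M z)).1.1 i = x.1.1 i
        rw [forgetMap_proj, ← hxdef]
      · simp only [show ρc (Fin.natAdd X.m i) = Fin.natAdd X.m (v i) from Fin.addCases_right i,
          extendPt_coord_nat]
        rw [hid _ hzT i, forgetMap_proj, ← hxdef]
    rw [hmain]

/-! ### From `SA` to `IsSemianalytic` -/

variable (X) in
/-- Basic sets presented by two separate families of conditions. -/
def BasicL (S : Set X.carrier) : Prop :=
  ∃ (a b : ℕ) (P Q : Fin a → X.O) (P' Q' : Fin b → X.O),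
    S = {x | (∀ i, ‖(P i : X.carrier → K) x‖ ≤ ‖(Q i : X.carrier → K) x‖)
      ∧ (∀ i, ‖(P' i : X.carrier → K) x‖ < ‖(Q' i : X.carrier → K) x‖)}

lemma BasicL.isBasic {S : Set X.carrier} (h : BasicL X S) : IsBasicSemianalytic X S := by
  obtain ⟨a, b, P, Q, P', Q', rfl⟩ := h
  refine ⟨a + b, a, Fin.append P P', Fin.append Q Q', Nat.le_add_right a b, ?_⟩
  ext x
  simp only [Set.mem_setOf_eq]
  constructor
  · rintro ⟨h1, h2⟩
    constructor
    · intro i hi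
      have he : i = Fin.castAdd b ⟨(i : ℕ), hi⟩ := Fin.ext rfl
      rw [he, Fin.append_left, Fin.append_left]
      exact h1 _
    · intro i hi
      have hlt : (i : ℕ) - a < b := by omega
      have he : i = Fin.natAdd a ⟨(i : ℕ) - a, hlt⟩ := Fin.ext (by simp; omega)
      rw [he, Fin.append_right, Fin.append_right]
      exact h2 _
  · rintro ⟨h1, h2⟩
    constructor
    · intro i
      have := h1 (Fin.castAdd b i) (by simpa using i.isLt)
      rwa [Fin.append_left, Fin.append_left] at this
    · intro i
      have := h2 (Fin.natAdd a i) (by simp)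
      rwa [Fin.append_right, Fin.append_right] at this

lemma BasicL.inter {S1 S2 : Set X.carrier} (h1 : BasicL X S1) (h2 : BasicL X S2) :
    BasicL X (S1 ∩ S2) := by
  obtain ⟨a1, b1, P1, Q1, P1', Q1', rfl⟩ := h1
  obtain ⟨a2, b2, P2, Q2, P2', Q2', rfl⟩ := h2
  refine ⟨a1 + a2, b1 + b2, Fin.append P1 P2, Fin.append Q1 Q2,
    Fin.append P1' P2', Fin.append Q1' Q2', ?_⟩
  ext x
  simp only [Set.mem_inter_iff, Set.mem_setOf_eq]
  constructor
  · rintro ⟨⟨hA1, hB1⟩, ⟨hA2, hB2⟩⟩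
    constructor
    · intro i
      refine Fin.addCases (motive := fun i =>
        ‖((Fin.append P1 P2 i : X.O) : X.carrier → K) x‖
          ≤ ‖((Fin.append Q1 Q2 i : X.O) : X.carrier → K) x‖)
        (fun i => ?_) (fun i => ?_) i
      · simp only [Fin.append_left]; exact hA1 i
      · simp only [Fin.append_right]; exact hA2 i
    · intro i
      refine Fin.addCases (motive := fun i =>
        ‖((Fin.append P1' P2' i : X.O) : X.carrier → K) x‖
          < ‖((Fin.append Q1' Q2' i : X.O) : X.carrier → K) x‖)
        (fun i => ?_) (fun i => ?_) i
      · simp only [Fin.append_left]; exact hB1 i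
      · simp only [Fin.append_right]; exact hB2 i
  · rintro ⟨hA, hB⟩
    refine ⟨⟨fun i => ?_, fun i => ?_⟩, ⟨fun i => ?_, fun i => ?_⟩⟩
    · have := hA (Fin.castAdd a2 i)
      rwa [Fin.append_left, Fin.append_left] at this
    · have := hB (Fin.castAdd b2 i)
      rwa [Fin.append_left, Fin.append_left] at this
    · have := hA (Fin.natAdd a1 i)
      rwa [Fin.append_right, Fin.append_right] at this
    · have := hB (Fin.natAdd b1 i)
      rwa [Fin.append_right, Fin.append_right] at this

lemma BasicL.ofLe (p q : X.O) :
    BasicL X {x | ‖(p : X.carrier → K) x‖ ≤ ‖(q : X.carrier → K) x‖} := by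
  refine ⟨1, 0, fun _ => p, fun _ => q, Fin.elim0, Fin.elim0, ?_⟩
  ext x
  simp only [Set.mem_setOf_eq]
  constructor
  · exact fun h => ⟨fun _ => h, fun i => i.elim0⟩
  · exact fun h => h.1 0

lemma BasicL.ofLt (p q : X.O) :
    BasicL X {x | ‖(p : X.carrier → K) x‖ < ‖(q : X.carrier → K) x‖} := by
  refine ⟨0, 1, Fin.elim0, Fin.elim0, fun _ => p, fun _ => q, ?_⟩
  ext x
  simp only [Set.mem_setOf_eq]
  constructor
  · exact fun h => ⟨fun i => i.elim0, fun _ => h⟩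
  · exact fun h => h.2 0

lemma SA.isSemianalytic {S : Set X.carrier} (h : SA X S) : IsSemianalytic X S := by
  have key : ∃ (k : ℕ) (B : Fin k → Set X.carrier),
      (∀ j, BasicL X (B j)) ∧ S = ⋃ j, B j := by
    induction h with
    | le p q => exact ⟨1, fun _ => _, fun _ => BasicL.ofLe p q, (Set.iUnion_const _).symm⟩
    | lt p q => exact ⟨1, fun _ => _, fun _ => BasicL.ofLt p q, (Set.iUnion_const _).symm⟩
    | inter h1 h2 ih1 ih2 =>
      obtain ⟨k1, B1, hB1, rfl⟩ := ih1
      obtain ⟨k2, B2, hB2, rfl⟩ := ih2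
      refine ⟨k1 * k2, fun j => B1 (finProdFinEquiv.symm j).1 ∩ B2 (finProdFinEquiv.symm j).2,
        fun j => (hB1 _).inter (hB2 _), ?_⟩
      ext x
      simp only [Set.mem_inter_iff, Set.mem_iUnion]
      constructor
      · rintro ⟨⟨j1, hj1⟩, ⟨j2, hj2⟩⟩
        exact ⟨finProdFinEquiv (j1, j2), by simpa using hj1, by simpa using hj2⟩
      · rintro ⟨j, hj1, hj2⟩
        exact ⟨⟨_, hj1⟩, ⟨_, hj2⟩⟩
    | union h1 h2 ih1 ih2 =>
      obtain ⟨k1, B1, hB1, rfl⟩ := ih1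
      obtain ⟨k2, B2, hB2, rfl⟩ := ih2
      refine ⟨k1 + k2, Fin.append B1 B2, fun j => ?_, ?_⟩
      · refine Fin.addCases (motive := fun j => BasicL X (Fin.append B1 B2 j))
          (fun i => ?_) (fun i => ?_) j
        · simp only [Fin.append_left]; exact hB1 i
        · simp only [Fin.append_right]; exact hB2 i
      · ext x
        simp only [Set.mem_union, Set.mem_iUnion]
        constructor
        · rintro (⟨i, hi⟩ | ⟨i, hi⟩)
          · exact ⟨Fin.castAdd _ i, by rwa [Fin.append_left]⟩
          · exact ⟨Fin.natAdd _ i, by rwa [Fin.append_right]⟩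
        · rintro ⟨j, hj⟩
          refine Fin.addCases (motive := fun j => x ∈ Fin.append B1 B2 j →
              ((∃ i, x ∈ B1 i) ∨ ∃ i, x ∈ B2 i)) (fun i hi => ?_) (fun i hi => ?_) j hj
          · exact Or.inl ⟨i, by rwa [Fin.append_left] at hi⟩
          · exact Or.inr ⟨i, by rwa [Fin.append_right] at hi⟩
  obtain ⟨k, B, hB, rfl⟩ := key
  exact ⟨k, B, fun j => (hB j).isBasic, rfl⟩

/-! ### Subanalytic sets via `SA` -/

variable (X) in
/-- Subanalytic with an `SA` witness. -/
def SubanSA (S : Set X.carrier) : Prop :=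
  ∃ (N : ℕ) (T : Set (X.prod K N).carrier), SA (X.prod K N) T ∧ S = X.projFun N '' T

lemma SubanSA.isSubanalytic {S : Set X.carrier} (h : SubanSA X S) : IsSubanalytic X S := by
  obtain ⟨N, T, hT, hS⟩ := h
  exact ⟨N, T, hT.isSemianalytic, hS⟩

lemma image_mapL_preimage {N1 N2 : ℕ} (T1 : Set (X.prod K N1).carrier) :
    X.projFun (N1 + N2) '' (mapL X N1 N2 ⁻¹' T1) = X.projFun N1 '' T1 := by
  ext x
  constructor
  · rintro ⟨z, hz, rfl⟩
    exact ⟨mapL X N1 N2 z, hz, prodMap_proj _ _ z⟩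
  · rintro ⟨z1, hz1, rfl⟩
    refine ⟨combinePt z1 (zeroPt (X.projFun N1 z1) N2), ?_, combinePt_proj _ _⟩
    show mapL X N1 N2 _ ∈ T1
    rw [combinePt_mapL]
    exact hz1

lemma image_mapR_preimage {N1 N2 : ℕ} (T2 : Set (X.prod K N2).carrier) :
    X.projFun (N1 + N2) '' (mapR X N1 N2 ⁻¹' T2) = X.projFun N2 '' T2 := by
  ext x
  constructor
  · rintro ⟨z, hz, rfl⟩
    exact ⟨mapR X N1 N2 z, hz, prodMap_proj _ _ z⟩
  · rintro ⟨z2, hz2, rfl⟩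
    have hx : X.projFun N1 (zeroPt (X.projFun N2 z2) N1) = X.projFun N2 z2 := zeroPt_proj _ _
    refine ⟨combinePt (zeroPt (X.projFun N2 z2) N1) z2, ?_, ?_⟩
    · show mapR X N1 N2 _ ∈ T2
      rw [combinePt_mapR _ _ hx]
      exact hz2
    · rw [combinePt_proj, zeroPt_proj]

lemma SubanSA.union {S1 S2 : Set X.carrier} (h1 : SubanSA X S1) (h2 : SubanSA X S2) :
    SubanSA X (S1 ∪ S2) := by
  obtain ⟨N1, T1, hT1, rfl⟩ := h1
  obtain ⟨N2, T2, hT2, rfl⟩ := h2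
  refine ⟨N1 + N2, mapL X N1 N2 ⁻¹' T1 ∪ mapR X N1 N2 ⁻¹' T2,
    SA.union (SA.preimage_prodMap _ _ hT1) (SA.preimage_prodMap _ _ hT2), ?_⟩
  rw [Set.image_union, image_mapL_preimage, image_mapR_preimage]

lemma SubanSA.empty : SubanSA X (∅ : Set X.carrier) :=
  ⟨0, ∅, SA.empty, by simp⟩

lemma SubanSA.of_eq {S1 S2 : Set X.carrier} (h : SubanSA X S1) (he : S1 = S2) :
    SubanSA X S2 := he ▸ h

lemma SubanSA.iUnion {k : ℕ} {B : Fin k → Set X.carrier} (h : ∀ j, SubanSA X (B j)) :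
    SubanSA X (⋃ j, B j) := by
  induction k with
  | zero => exact SubanSA.empty.of_eq (Set.iUnion_of_empty B).symm
  | succ k ih =>
    have he : (⋃ j, B j) = B 0 ∪ ⋃ j : Fin k, B j.succ := by
      ext x
      simp only [Set.mem_iUnion, Set.mem_union]
      constructor
      · rintro ⟨j, hj⟩
        rcases Fin.eq_zero_or_eq_succ j with rfl | ⟨i, rfl⟩
        · exact Or.inl hj
        · exact Or.inr ⟨i, hj⟩
      · rintro (hj | ⟨i, hi⟩)
        · exact ⟨0, hj⟩
        · exact ⟨i.succ, hi⟩
    exact ((h 0).union (ih fun j => h j.succ)).of_eq he.symm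

/-! ### Main argument for a basic `D`-semianalytic set -/

lemma basicD_subanSA {B : Set X.carrier} (hB : IsBasicDSemianalytic X B) : SubanSA X B := by
  obtain ⟨mm, n, p, q, hnm, hD, hBe⟩ := hB
  have hrep : ∀ i : Fin (mm + mm), Rep X (Fin.append p q i) := by
    intro i
    refine Fin.addCases (motive := fun i => Rep X (Fin.append p q i))
      (fun i => ?_) (fun i => ?_) i
    · simp only [Fin.append_left]; exact isDFun_rep (hD i).1
    · simp only [Fin.append_right]; exact isDFun_rep (hD i).2
  obtain ⟨M, c, T, j, hc, hSA, hsurj, hid⟩ := Rep.joint (Fin.append p q) hrep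
  have hidp : ∀ z ∈ T, ∀ i : Fin mm, z.1.1 (Fin.natAdd X.m (j (Fin.castAdd mm i)))
      = c (Fin.castAdd mm i) * p i (X.projFun M z) := by
    intro z hz i
    have := hid z hz (Fin.castAdd mm i)
    rwa [Fin.append_left] at this
  have hidq : ∀ z ∈ T, ∀ i : Fin mm, z.1.1 (Fin.natAdd X.m (j (Fin.natAdd mm i)))
      = c (Fin.natAdd mm i) * q i (X.projFun M z) := by
    intro z hz i
    have := hid z hz (Fin.natAdd mm i)
    rwa [Fin.append_right] at this
  set Cset : Fin mm → Set (X.prod K M).carrier := fun i =>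
    if (i : ℕ) < n then
      {z | ‖c (Fin.natAdd mm i) * z.1.1 (Fin.natAdd X.m (j (Fin.castAdd mm i)))‖
        ≤ ‖c (Fin.castAdd mm i) * z.1.1 (Fin.natAdd X.m (j (Fin.natAdd mm i)))‖}
    else
      {z | ‖c (Fin.natAdd mm i) * z.1.1 (Fin.natAdd X.m (j (Fin.castAdd mm i)))‖
        < ‖c (Fin.castAdd mm i) * z.1.1 (Fin.natAdd X.m (j (Fin.natAdd mm i)))‖}
    with hCdef
  have hCSA : ∀ i, SA (X.prod K M) (Cset i) := by
    intro i
    simp only [hCdef]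
    by_cases hi : (i : ℕ) < n
    · rw [if_pos hi]
      exact (SA.le
        ⟨fun z => c (Fin.natAdd mm i) * z.1.1 (Fin.natAdd X.m (j (Fin.castAdd mm i))),
          const_mul_mem_O _ (coord_mem_O _ _)⟩
        ⟨fun z => c (Fin.castAdd mm i) * z.1.1 (Fin.natAdd X.m (j (Fin.natAdd mm i))),
          const_mul_mem_O _ (coord_mem_O _ _)⟩).of_eq rfl
    · rw [if_neg hi]
      exact (SA.lt
        ⟨fun z => c (Fin.natAdd mm i) * z.1.1 (Fin.natAdd X.m (j (Fin.castAdd mm i))),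
          const_mul_mem_O _ (coord_mem_O _ _)⟩
        ⟨fun z => c (Fin.castAdd mm i) * z.1.1 (Fin.natAdd X.m (j (Fin.natAdd mm i))),
          const_mul_mem_O _ (coord_mem_O _ _)⟩).of_eq rfl
  refine ⟨M, T ∩ ⋂ i, Cset i, hSA.inter (SA.iInter hCSA), ?_⟩
  ext x
  constructor
  · intro hx
    rw [hBe] at hx
    obtain ⟨hle, hlt⟩ := hx
    obtain ⟨z, hzT, hzx⟩ := hsurj x
    refine ⟨z, ⟨hzT, Set.mem_iInter.2 fun i => ?_⟩, hzx⟩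
    simp only [hCdef]
    by_cases hi : (i : ℕ) < n
    · rw [if_pos hi]
      show ‖_‖ ≤ ‖_‖
      rw [hidp z hzT i, hidq z hzT i, hzx]
      exact (cancel_le (hc (Fin.castAdd mm i)) (hc (Fin.natAdd mm i)) _ _).2 (hle i hi)
    · rw [if_neg hi]
      show ‖_‖ < ‖_‖
      rw [hidp z hzT i, hidq z hzT i, hzx]
      exact (cancel_lt (hc (Fin.castAdd mm i)) (hc (Fin.natAdd mm i)) _ _).2
        (hlt i (le_of_not_gt hi))
  · rintro ⟨z, ⟨hzT, hzC⟩, rfl⟩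
    rw [hBe]
    have hzC' := Set.mem_iInter.1 hzC
    constructor
    · intro i hi
      have := hzC' i
      simp only [hCdef] at this
      rw [if_pos hi] at this
      have h1 : ‖c (Fin.natAdd mm i) * z.1.1 (Fin.natAdd X.m (j (Fin.castAdd mm i)))‖
          ≤ ‖c (Fin.castAdd mm i) * z.1.1 (Fin.natAdd X.m (j (Fin.natAdd mm i)))‖ := this
      rw [hidp z hzT i, hidq z hzT i] at h1
      exact (cancel_le (hc (Fin.castAdd mm i)) (hc (Fin.natAdd mm i)) _ _).1 h1
    · intro i hi
      have := hzC' i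
      simp only [hCdef] at this
      rw [if_neg (by omega : ¬ (i : ℕ) < n)] at this
      have h1 : ‖c (Fin.natAdd mm i) * z.1.1 (Fin.natAdd X.m (j (Fin.castAdd mm i)))‖
          < ‖c (Fin.castAdd mm i) * z.1.1 (Fin.natAdd X.m (j (Fin.natAdd mm i)))‖ := this
      rw [hidp z hzT i, hidq z hzT i] at h1
      exact (cancel_lt (hc (Fin.castAdd mm i)) (hc (Fin.natAdd mm i)) _ _).1 h1

end Machinery

end RigidQE
end

noncomputable section
namespace RigidQE

/-- Every `D`-semianalytic subset of a reduced affinoid variety `X` is subanalytic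
in `X`. -/
theorem dSemianalytic_isSubanalytic
    (K : Type) [NormedField K] [CompleteSpace K] [IsAlgClosed K] [IsUltrametricDist K]
    (X : Affinoid K) (hred : IsReduced X.O) (S : Set X.carrier) (hS : IsDSemianalytic X S) :
    IsSubanalytic X S := by
  obtain ⟨k, B, hB, rfl⟩ := hS
  exact (SubanSA.iUnion fun j => basicD_subanSA (hB j)).isSubanalytic

end RigidQE
end
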